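/- Let u be a unitary on H, q ∈ 𝕋, S the bilateral shift on ℓ²(ℤ) (S e_k = e_{k+1}), and p_k the orthogonal projection onto ℂe_k. Define ũ = u ⊗ S and ṽ = ∑_{k∈ℤ} q^k u^k v u^{-k} ⊗ p_k on H ⊗ ℓ²(ℤ), where v is any unitary on H. Then ũ and ṽ are unitaries satisfying ṽũ = q·ũṽ. -/

import Mathlib

/-- Integer powers of an operator `u`, where for `k < 0` we use `(u*)^(-k)`. -/
noncomputable def opZpow {H : Type*} [NormedAddCommGroup H] [InnerProductSpace ℂ H]
    [CompleteSpace H] (u : H →L[ℂ] H) : ℤ → (H →L[ℂ] H)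
  | Int.ofNat n => u ^ n
  | Int.negSucc n => (star u) ^ (n + 1)

/-- On `H ⊗ ℓ²(ℤ)` (modeled as `ℓ²(ℤ, H)`), the operators `ũ = u ⊗ S`
(given by `(ũ f)(k) = u(f(k-1))`) and `ṽ = ∑_k q^k u^k v u^{-k} ⊗ p_k`
(given by `(ṽ f)(k) = q^k u^k v u^{-k} (f k)`) are unitaries satisfying `ṽũ = q·ũṽ`. -/
lemma opZpow_eq {H : Type*} [NormedAddCommGroup H] [InnerProductSpace ℂ H]
    [CompleteSpace H] {u : H →L[ℂ] H} (hu : u ∈ unitary (H →L[ℂ] H)) (k : ℤ) :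
    opZpow u k = (((⟨u, hu⟩ : unitary (H →L[ℂ] H)) ^ k : unitary (H →L[ℂ] H)) : H →L[ℂ] H) := by
  cases k with
  | ofNat n =>
      show u ^ n = _
      rw [Int.ofNat_eq_natCast, zpow_natCast, SubmonoidClass.coe_pow]
  | negSucc n =>
      show (star u) ^ (n + 1) = _
      rw [zpow_negSucc, ← Unitary.star_eq_inv, Unitary.coe_star, SubmonoidClass.coe_pow,
        star_pow]

lemma mem_unitary_of_inner_surj {E : Type*} [NormedAddCommGroup E] [InnerProductSpace ℂ E]
    [CompleteSpace E] (T : E →L[ℂ] E)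
    (hinner : ∀ f g : E, (inner ℂ (T f) (T g) : ℂ) = inner ℂ f g)
    (hsurj : Function.Surjective T) : T ∈ unitary (E →L[ℂ] E) := by
  have h1 : ContinuousLinearMap.adjoint T ∘L T = 1 :=
    (ContinuousLinearMap.inner_map_map_iff_adjoint_comp_self T).mp hinner
  have hstar : star T * T = 1 := by
    rw [ContinuousLinearMap.star_eq_adjoint]; exact h1
  refine Unitary.mem_iff.mpr ⟨hstar, ?_⟩
  ext y
  obtain ⟨x, rfl⟩ := hsurj y
  have : (star T) (T x) = x := by
    have := congrFun (congrArg DFunLike.coe hstar) x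
    simpa using this
  simp [ContinuousLinearMap.mul_apply, this]

theorem stmt_3 {H : Type*} [NormedAddCommGroup H] [InnerProductSpace ℂ H] [CompleteSpace H]
    (q : ℂ) (hq : ‖q‖ = 1) (u v : H →L[ℂ] H)
    (hu : u ∈ unitary (H →L[ℂ] H)) (hv : v ∈ unitary (H →L[ℂ] H))
    (Ut Vt : lp (fun _ : ℤ => H) 2 →L[ℂ] lp (fun _ : ℤ => H) 2)
    (hUt : ∀ (f : lp (fun _ : ℤ => H) 2) (k : ℤ), (Ut f : ∀ _ : ℤ, H) k = u (f (k - 1)))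
    (hVt : ∀ (f : lp (fun _ : ℤ => H) 2) (k : ℤ),
      (Vt f : ∀ _ : ℤ, H) k = q ^ k • (opZpow u k * v * opZpow u (-k)) (f k)) :
    Ut ∈ unitary (lp (fun _ : ℤ => H) 2 →L[ℂ] lp (fun _ : ℤ => H) 2) ∧
    Vt ∈ unitary (lp (fun _ : ℤ => H) 2 →L[ℂ] lp (fun _ : ℤ => H) 2) ∧
    Vt * Ut = q • (Ut * Vt) := by
  have hq0 : q ≠ 0 := by
    intro h; rw [h] at hq; simp at hq
  set U : unitary (H →L[ℂ] H) := ⟨u, hu⟩ with hUdef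
  set V : unitary (H →L[ℂ] H) := ⟨v, hv⟩ with hVdef
  have hW : ∀ k : ℤ, (opZpow u k * v * opZpow u (-k))
      = ((U ^ k * V * U ^ (-k) : unitary (H →L[ℂ] H)) : H →L[ℂ] H) := by
    intro k
    rw [opZpow_eq hu, opZpow_eq hu]
    rfl
  have hWk : ∀ k : ℤ, (opZpow u k * v * opZpow u (-k)) ∈ unitary (H →L[ℂ] H) := by
    intro k
    rw [hW k]
    exact (U ^ k * V * U ^ (-k)).property
  -- norms of q^k
  have hqk_norm : ∀ k : ℤ, ‖q ^ k‖ = 1 := by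
    intro k; rw [norm_zpow, hq, one_zpow]
  have hcq : (starRingEnd ℂ) q = q⁻¹ := by
    have h1 : q * (starRingEnd ℂ) q = 1 := by
      rw [Complex.mul_conj]
      norm_cast
      rw [Complex.normSq_eq_norm_sq, hq, one_pow]
    field_simp
    linear_combination h1
  have hqk : ∀ k : ℤ, (starRingEnd ℂ) (q ^ k) * q ^ k = 1 := by
    intro k
    rw [map_zpow₀, hcq, inv_zpow, inv_mul_cancel₀ (zpow_ne_zero k hq0)]
  -- star u acts as two-sided inverse of u
  have hssu : ∀ x : H, u ((star u) x) = x := by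
    intro x
    have := congrFun (congrArg DFunLike.coe (Unitary.mul_star_self_of_mem hu)) x
    simpa using this
  -- Ut is unitary
  have hUt_mem : Ut ∈ unitary _ := by
    apply mem_unitary_of_inner_surj
    · intro f g
      rw [lp.inner_eq_tsum, lp.inner_eq_tsum]
      calc ∑' k : ℤ, (inner ℂ ((Ut f : ∀ _ : ℤ, H) k) ((Ut g : ∀ _ : ℤ, H) k) : ℂ)
          = ∑' k : ℤ, (inner ℂ (f (k - 1)) (g (k - 1)) : ℂ) := by
            congr 1; funext k
            rw [hUt, hUt, ContinuousLinearMap.inner_map_map_of_mem_unitary hu]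
        _ = ∑' k : ℤ, (inner ℂ (f k) (g k) : ℂ) :=
            (Equiv.subRight (1 : ℤ)).tsum_eq (fun k => (inner ℂ (f k) (g k) : ℂ))
    · intro g
      have hmem : Memℓp (fun k : ℤ => (star u) ((g : ∀ _ : ℤ, H) (k + 1))) 2 := by
        apply memℓp_gen
        have hs := (lp.memℓp g).summable (p := 2) (by norm_num)
        have hs' := ((Equiv.addRight (1 : ℤ)).summable_iff
          (f := fun k : ℤ => ‖(g : ∀ _ : ℤ, H) k‖ ^ ENNReal.toReal 2)).mpr hs
        simpa [Function.comp_def,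
          ContinuousLinearMap.norm_map_of_mem_unitary (Unitary.star_mem hu)] using hs'
      refine ⟨⟨_, hmem⟩, ?_⟩
      apply lp.ext
      funext k
      show (Ut _ : ∀ _ : ℤ, H) k = g k
      rw [hUt]
      show u ((star u) ((g : ∀ _ : ℤ, H) (k - 1 + 1))) = g k
      rw [sub_add_cancel, hssu]
  -- Vt is unitary
  have hVt_mem : Vt ∈ unitary _ := by
    apply mem_unitary_of_inner_surj
    · intro f g
      rw [lp.inner_eq_tsum, lp.inner_eq_tsum]
      congr 1; funext k
      rw [hVt, hVt, inner_smul_left, inner_smul_right,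
        ContinuousLinearMap.inner_map_map_of_mem_unitary (hWk k), ← mul_assoc, hqk, one_mul]
    · intro g
      set w : ℤ → (H →L[ℂ] H) := fun k => opZpow u k * v * opZpow u (-k) with hwdef
      have hmem : Memℓp (fun k : ℤ =>
          (starRingEnd ℂ) (q ^ k) • (star (w k)) ((g : ∀ _ : ℤ, H) k)) 2 := by
        apply memℓp_gen
        have hs := (lp.memℓp g).summable (p := 2) (by norm_num)
        convert hs using 2 with k
        rw [norm_smul, RCLike.norm_conj, hqk_norm, one_mul,
          ContinuousLinearMap.norm_map_of_mem_unitary (Unitary.star_mem (hWk k))]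
      refine ⟨⟨_, hmem⟩, ?_⟩
      apply lp.ext
      funext k
      show (Vt _ : ∀ _ : ℤ, H) k = g k
      rw [hVt]
      show q ^ k • (w k) ((starRingEnd ℂ) (q ^ k) • (star (w k)) ((g : ∀ _ : ℤ, H) k)) = g k
      rw [ContinuousLinearMap.map_smul, smul_smul, mul_comm, hqk, one_smul]
      have := congrFun (congrArg DFunLike.coe (Unitary.mul_star_self_of_mem (hWk k)))
        ((g : ∀ _ : ℤ, H) k)
      exact this
  refine ⟨hUt_mem, hVt_mem, ?_⟩
  -- commutation relation
  ext f k
  show ((Vt (Ut f)) : ∀ _ : ℤ, H) k = ((q • (Ut (Vt f)) : lp (fun _ : ℤ => H) 2) : ∀ _ : ℤ, H) k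
  rw [lp.coeFn_smul, Pi.smul_apply, hVt, hUt, hUt, hVt]
  rw [ContinuousLinearMap.map_smul, smul_smul]
  have hqq : q * q ^ (k - 1) = q ^ k := by
    rw [mul_comm, ← zpow_add_one₀ hq0, sub_add_cancel]
  rw [hqq]
  congr 1
  have key : (U ^ k * V * U ^ (-k)) * U = U * (U ^ (k - 1) * V * U ^ (-(k - 1))) := by
    group
  have := congrFun (congrArg (fun T : unitary (H →L[ℂ] H) => (T : H →L[ℂ] H).toFun) key)
    (f (k - 1))
  simp only [Submonoid.coe_mul, ContinuousLinearMap.coe_mul] at this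
  rw [hW k, hW (k - 1)]
  simpa using this
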